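/- Let U ⊆ ℝ be open, s₀ ∈ U, a > 0, b ∈ ℝ. Let y : U × [0, 2π] → ℝ be continuous with continuous partial derivative ∂y/∂s, and let x : U → ℝ be differentiable with x(s₀) > 0. Assume that for all s ∈ U and t ∈ [0, 2π]: 0 < y(s, t) < x(s) and a·y(s, t) + b > 0; that the identity (a x(s) + b) ∫₀^{2π} y(s, t)/(x(s) − y(s, t)) dt = 1 holds for all s ∈ U; and that ∂y/∂s(s₀, t) > 0 for every t ∈ [0, 2π]. Then x'(s₀) ≠ 0. -/

import Mathlib

set_option maxHeartbeats 1000000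

open Real MeasureTheory

/-- Abstract content of Proposition 4.3: let `U ⊆ ℝ` be open, `s₀ ∈ U`, `a > 0`,
`b ∈ ℝ`. Let `y : U × [0, 2π] → ℝ` be continuous with continuous partial
derivative `∂y/∂s`, and let `x : U → ℝ` be differentiable with `x(s₀) > 0`.
Assume that for all `s ∈ U`, `t ∈ [0, 2π]`: `0 < y(s,t) < x(s)` and
`a·y(s,t) + b > 0`; that `(a x(s) + b) ∫₀^{2π} y(s,t)/(x(s) − y(s,t)) dt = 1`
for all `s ∈ U`; and that `∂y/∂s(s₀, t) > 0` for all `t`. Then `x'(s₀) ≠ 0`. -/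
theorem defect_band_not_flat (U : Set ℝ) (hU : IsOpen U) (s₀ : ℝ) (hs₀ : s₀ ∈ U)
    (a b : ℝ) (ha : 0 < a)
    (y dy : ℝ → ℝ → ℝ) (x : ℝ → ℝ)
    (hy_cont : ContinuousOn (fun p : ℝ × ℝ => y p.1 p.2) (U ×ˢ Set.Icc 0 (2 * π)))
    (hdy : ∀ s ∈ U, ∀ t ∈ Set.Icc 0 (2 * π),
      HasDerivAt (fun s' => y s' t) (dy s t) s)
    (hdy_cont : ContinuousOn (fun p : ℝ × ℝ => dy p.1 p.2) (U ×ˢ Set.Icc 0 (2 * π)))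
    (hx_diff : ∀ s ∈ U, DifferentiableAt ℝ x s)
    (hx_pos : 0 < x s₀)
    (h_bounds : ∀ s ∈ U, ∀ t ∈ Set.Icc 0 (2 * π), 0 < y s t ∧ y s t < x s)
    (h_ab : ∀ s ∈ U, ∀ t ∈ Set.Icc 0 (2 * π), 0 < a * y s t + b)
    (h_eq : ∀ s ∈ U,
      (a * x s + b) * ∫ t in (0:ℝ)..(2 * π), y s t / (x s - y s t) = 1)
    (h_dy_pos : ∀ t ∈ Set.Icc 0 (2 * π), 0 < dy s₀ t) :
    deriv x s₀ ≠ 0 := by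
  intro hcon
  have h2π : (0:ℝ) < 2 * π := by positivity
  have hIcc02 : Set.uIcc (0:ℝ) (2*π) = Set.Icc 0 (2*π) := Set.uIcc_of_le h2π.le
  have hIoc02 : Set.uIoc (0:ℝ) (2*π) = Set.Ioc 0 (2*π) := Set.uIoc_of_le h2π.le
  set x₀ := x s₀ with hx₀def
  -- a closed ball inside U
  obtain ⟨ε, hε, hballU⟩ := Metric.isOpen_iff.mp hU s₀ hs₀
  set r : ℝ := ε / 2 with hrdef
  have hr : 0 < r := by positivity
  have hJU : Metric.closedBall s₀ r ⊆ U :=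
    (Metric.closedBall_subset_ball (by simp [hrdef]; linarith)).trans hballU
  set J := Metric.closedBall s₀ r with hJdef
  set K : Set (ℝ × ℝ) := J ×ˢ Set.Icc 0 (2*π) with hKdef
  have hKsub : K ⊆ U ×ˢ Set.Icc 0 (2*π) := Set.prod_mono hJU subset_rfl
  have hKcomp : IsCompact K := (isCompact_closedBall s₀ r).prod isCompact_Icc
  have hs₀J : s₀ ∈ J := Metric.mem_closedBall_self hr.le
  have hKne : K.Nonempty := ⟨(s₀, 0), hs₀J, ⟨le_refl 0, h2π.le⟩⟩
  have hxc : ContinuousOn x U := fun s hs => (hx_diff s hs).continuousAt.continuousWithinAt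
  -- continuity of p ↦ x p.1 - y p.1 p.2 on K
  have hxK : ContinuousOn (fun p : ℝ × ℝ => x p.1) K :=
    hxc.comp continuous_fst.continuousOn (fun p hp => hJU hp.1)
  have hhK : ContinuousOn (fun p : ℝ × ℝ => x p.1 - y p.1 p.2) K :=
    hxK.sub (hy_cont.mono hKsub)
  -- minimum m of x - y on K
  obtain ⟨pm, hpmK, hpm⟩ := hKcomp.exists_isMinOn hKne hhK
  set m : ℝ := x pm.1 - y pm.1 pm.2 with hmdef
  have hm : 0 < m := by
    have := h_bounds pm.1 (hJU hpmK.1) pm.2 hpmK.2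
    simp only [hmdef]; linarith [this.2]
  have hmle : ∀ s ∈ J, ∀ t ∈ Set.Icc 0 (2*π), m ≤ x s - y s t := by
    intro s hs t ht
    exact hpm (Set.mk_mem_prod hs ht)
  -- bounds Y for |y|, D for |dy| on K
  obtain ⟨Y, hY⟩ := hKcomp.exists_bound_of_continuousOn (hy_cont.mono hKsub)
  obtain ⟨D, hD⟩ := hKcomp.exists_bound_of_continuousOn (hdy_cont.mono hKsub)
  -- choose ε' ≤ r with |x s - x₀| < m/2 on ball
  have hxcont : ContinuousAt x s₀ := (hx_diff s₀ hs₀).continuousAt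
  obtain ⟨δ, hδ, hδx⟩ := Metric.continuousAt_iff.mp hxcont (m/2) (by linarith)
  set ε' : ℝ := min δ r with hε'def
  have hε' : 0 < ε' := lt_min hδ hr
  have hballJ : Metric.ball s₀ ε' ⊆ J := fun s hs =>
    Metric.ball_subset_closedBall (Metric.ball_subset_ball (min_le_right _ _) hs)
  have hxnear : ∀ s ∈ Metric.ball s₀ ε', |x s - x₀| < m / 2 := by
    intro s hs
    have : dist s s₀ < δ := lt_of_lt_of_le hs (min_le_left _ _)
    simpa [Real.dist_eq] using hδx this
  -- key lower bounds on denominators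
  have hden : ∀ s ∈ Metric.ball s₀ ε', ∀ t ∈ Set.Icc 0 (2*π),
      m ≤ x s - y s t ∧ m / 2 ≤ x₀ - y s t := by
    intro s hs t ht
    have h1 := hmle s (hballJ hs) t ht
    have h2 := hxnear s hs
    constructor
    · exact h1
    · have := abs_lt.mp h2
      linarith [this.1]
  have hyY : ∀ s ∈ J, ∀ t ∈ Set.Icc 0 (2*π), |y s t| ≤ Y := by
    intro s hs t ht; exact hY (s, t) (Set.mk_mem_prod hs ht)
  have hdyD : ∀ s ∈ J, ∀ t ∈ Set.Icc 0 (2*π), |dy s t| ≤ D := by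
    intro s hs t ht; exact hD (s, t) (Set.mk_mem_prod hs ht)
  -- positivity of a x s + b on U
  have haxb : ∀ s ∈ U, 0 < a * x s + b := by
    intro s hs
    have ht0 : (0:ℝ) ∈ Set.Icc 0 (2*π) := ⟨le_refl 0, h2π.le⟩
    have h1 := h_ab s hs 0 ht0
    have h2 := (h_bounds s hs 0 ht0).2
    nlinarith
  -- the identity in inverse form
  have hG : ∀ s ∈ U, (∫ t in (0:ℝ)..(2*π), y s t / (x s - y s t)) = (a * x s + b)⁻¹ := by
    intro s hs
    have := h_eq s hs
    field_simp [(haxb s hs).ne'] at this ⊢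
    linarith
  -- continuity in t for fixed s ∈ U
  have hyc_t : ∀ s ∈ U, ContinuousOn (fun t => y s t) (Set.Icc 0 (2*π)) := by
    intro s hs
    exact hy_cont.comp (continuous_const.prodMk continuous_id).continuousOn
      (fun t ht => Set.mk_mem_prod hs ht)
  have hdyc_t : ∀ s ∈ U, ContinuousOn (fun t => dy s t) (Set.Icc 0 (2*π)) := by
    intro s hs
    exact hdy_cont.comp (continuous_const.prodMk continuous_id).continuousOn
      (fun t ht => Set.mk_mem_prod hs ht)
  -- F and F'
  set F : ℝ → ℝ → ℝ := fun s t => y s t / (x₀ - y s t) with hFdef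
  set F' : ℝ → ℝ → ℝ := fun s t => dy s t * x₀ / (x₀ - y s t)^2 with hF'def
  have hm2 : 0 < m / 2 := by linarith
  -- integrability of F s for s in the ball
  have hFcont : ∀ s ∈ Metric.ball s₀ ε', ContinuousOn (F s) (Set.Icc 0 (2*π)) := by
    intro s hs
    apply ContinuousOn.div (hyc_t s (hJU (hballJ hs)))
      (continuousOn_const.sub (hyc_t s (hJU (hballJ hs))))
    intro t ht
    have := (hden s hs t ht).2
    show x₀ - y s t ≠ 0
    linarith
  have hFint : ∀ s ∈ Metric.ball s₀ ε', IntervalIntegrable (F s) volume 0 (2*π) := by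
    intro s hs
    apply ContinuousOn.intervalIntegrable
    rw [hIcc02]
    exact hFcont s hs
  have hs₀ball : s₀ ∈ Metric.ball s₀ ε' := Metric.mem_ball_self hε'
  -- derivative of F in s
  have hFderiv : ∀ t ∈ Set.Icc 0 (2*π), ∀ s ∈ Metric.ball s₀ ε',
      HasDerivAt (fun s' => F s' t) (F' s t) s := by
    intro t ht s hs
    have hy' := hdy s (hJU (hballJ hs)) t ht
    have hne : x₀ - y s t ≠ 0 := by have := (hden s hs t ht).2; linarith
    have hdiv := hy'.div ((hasDerivAt_const s x₀).sub hy') hne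
    refine hdiv.congr_deriv ?_
    simp only [hF'def, Pi.sub_apply]
    rw [div_eq_div_iff (by positivity) (by positivity)]
    ring
  -- bound for F'
  set C : ℝ := D * x₀ / (m/2)^2 with hCdef
  have hF'bound : ∀ t ∈ Set.Ioc 0 (2*π), ∀ s ∈ Metric.ball s₀ ε', |F' s t| ≤ C := by
    intro t ht s hs
    have htI : t ∈ Set.Icc 0 (2*π) := Set.Ioc_subset_Icc_self ht
    have h1 := (hden s hs t htI).2
    have h2 := hdyD s (hballJ hs) t htI
    have hq : (m/2)^2 ≤ (x₀ - y s t)^2 := by nlinarith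
    simp only [hF'def]
    rw [abs_div, abs_mul, abs_of_pos hx_pos, abs_of_nonneg (sq_nonneg (x₀ - y s t))]
    have hD0 : 0 ≤ D := le_trans (abs_nonneg _) h2
    apply div_le_div₀ (by positivity) (by nlinarith [abs_nonneg (dy s t)])
      (by positivity) hq
  -- differentiation under the integral
  have hmeas1 : ∀ᶠ s in nhds s₀,
      AEStronglyMeasurable (F s) (volume.restrict (Set.uIoc (0:ℝ) (2*π))) := by
    filter_upwards [Metric.ball_mem_nhds s₀ hε'] with s hs
    rw [hIoc02]
    exact ((hFcont s hs).mono Set.Ioc_subset_Icc_self).aestronglyMeasurable measurableSet_Ioc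
  have hmeas2 : AEStronglyMeasurable (F' s₀) (volume.restrict (Set.uIoc (0:ℝ) (2*π))) := by
    have hc : ContinuousOn (F' s₀) (Set.Icc 0 (2*π)) := by
      apply ContinuousOn.div ((hdyc_t s₀ hs₀).mul continuousOn_const)
        (((continuousOn_const.sub (hyc_t s₀ hs₀))).pow 2)
      intro t ht
      have h2 := (hden s₀ hs₀ball t ht).2
      exact pow_ne_zero 2 (by show x₀ - y s₀ t ≠ 0; linarith)
    rw [hIoc02]
    exact (hc.mono Set.Ioc_subset_Icc_self).aestronglyMeasurable measurableSet_Ioc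
  have hbnd : ∀ᵐ t ∂(volume : Measure ℝ), t ∈ Set.uIoc (0:ℝ) (2*π) →
      ∀ s ∈ Metric.ball s₀ ε', ‖F' s t‖ ≤ C := by
    apply Filter.Eventually.of_forall
    intro t ht s hs
    rw [hIoc02] at ht
    exact hF'bound t ht s hs
  have hdiff : ∀ᵐ t ∂(volume : Measure ℝ), t ∈ Set.uIoc (0:ℝ) (2*π) →
      ∀ s ∈ Metric.ball s₀ ε', HasDerivAt (fun s' => F s' t) (F' s t) s := by
    apply Filter.Eventually.of_forall
    intro t ht s hs
    rw [hIoc02] at ht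
    exact hFderiv t (Set.Ioc_subset_Icc_self ht) s hs
  obtain ⟨hF'int, hKderiv⟩ :=
    intervalIntegral.hasDerivAt_integral_of_dominated_loc_of_deriv_le (Metric.ball_mem_nhds s₀ hε') hmeas1
      (hFint s₀ hs₀ball) hmeas2 hbnd intervalIntegrable_const hdiff
  -- the derivative is positive
  set c₀ : ℝ := ∫ t in (0:ℝ)..(2*π), F' s₀ t with hc₀def
  have hc₀pos : 0 < c₀ := by
    apply intervalIntegral.intervalIntegral_pos_of_pos_on hF'int _ h2π
    intro t ht
    have htI : t ∈ Set.Icc 0 (2*π) := Set.Ioo_subset_Icc_self ht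
    have h1 := h_dy_pos t htI
    have h2 := (hden s₀ hs₀ball t htI).2
    simp only [hF'def]
    exact div_pos (mul_pos h1 hx_pos) (pow_pos (by linarith) 2)
  -- now: K s = A s + (a x s + b)⁻¹, with A = o(s - s₀)
  have hx0' : HasDerivAt x 0 s₀ := by
    have := (hx_diff s₀ hs₀).hasDerivAt
    rwa [hcon] at this
  have hgd : HasDerivAt (fun s => (a * x s + b)⁻¹) 0 s₀ := by
    have hu : HasDerivAt (fun s => a * x s + b) (a * 0) s₀ :=
      (hx0'.const_mul a).add_const b
    have := hu.inv (haxb s₀ hs₀).ne'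
    exact this.congr_deriv (by simp)
  set A : ℝ → ℝ := fun s => (∫ t in (0:ℝ)..(2*π), F s t) - (a * x s + b)⁻¹ with hAdef
  have hAs₀ : A s₀ = 0 := by
    simp only [hAdef, hFdef]
    rw [← hG s₀ hs₀]
    simp [sub_eq_zero, hx₀def]
  -- bound |A s| ≤ C₂ * |x s - x₀| on the ball
  set C₂ : ℝ := Y / (m/2 * m) * (2*π) with hC₂def
  have hAbound : ∀ s ∈ Metric.ball s₀ ε', |A s| ≤ C₂ * |x s - x₀| := by
    intro s hs
    have hsU : s ∈ U := hJU (hballJ hs)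
    have hGcont : ContinuousOn (fun t => y s t / (x s - y s t)) (Set.Icc 0 (2*π)) := by
      apply ContinuousOn.div (hyc_t s hsU) (continuousOn_const.sub (hyc_t s hsU))
      intro t ht
      have := (hden s hs t ht).1
      show x s - y s t ≠ 0
      linarith
    have hGint : IntervalIntegrable (fun t => y s t / (x s - y s t)) volume 0 (2*π) :=
      by
        apply ContinuousOn.intervalIntegrable
        rw [hIcc02]
        exact hGcont
    have hAeq : A s = ∫ t in (0:ℝ)..(2*π), (F s t - y s t / (x s - y s t)) := by
      rw [intervalIntegral.integral_sub (hFint s hs) hGint]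
      simp only [hAdef]
      rw [hG s hsU]
    rw [hAeq]
    have hpt : ∀ t ∈ Set.uIoc (0:ℝ) (2*π),
        ‖F s t - y s t / (x s - y s t)‖ ≤ Y / (m/2 * m) * |x s - x₀| := by
      intro t ht
      rw [hIoc02] at ht
      have htI : t ∈ Set.Icc 0 (2*π) := Set.Ioc_subset_Icc_self ht
      have h1 := (hden s hs t htI).1
      have h2 := (hden s hs t htI).2
      have h3 := hyY s (hballJ hs) t htI
      have hne1 : x₀ - y s t ≠ 0 := by linarith
      have hne2 : x s - y s t ≠ 0 := by linarith
      have heq : F s t - y s t / (x s - y s t)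
          = y s t * (x s - x₀) / ((x₀ - y s t) * (x s - y s t)) := by
        simp only [hFdef]
        field_simp
        ring
      rw [heq, Real.norm_eq_abs, abs_div, abs_mul, abs_mul,
        abs_of_pos (by linarith : (0:ℝ) < x₀ - y s t),
        abs_of_pos (by linarith : (0:ℝ) < x s - y s t)]
      rw [div_mul_eq_mul_div]
      have hY0 : 0 ≤ Y := le_trans (abs_nonneg _) h3
      apply div_le_div₀ (mul_nonneg hY0 (abs_nonneg _))
        (mul_le_mul_of_nonneg_right h3 (abs_nonneg _))
        (mul_pos hm2 hm) (by nlinarith)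
    calc |∫ t in (0:ℝ)..(2*π), (F s t - y s t / (x s - y s t))|
        ≤ Y / (m/2 * m) * |x s - x₀| * |2*π - 0| :=
          intervalIntegral.norm_integral_le_of_norm_le_const hpt
      _ = C₂ * |x s - x₀| := by
          rw [abs_of_pos (by linarith : (0:ℝ) < 2*π - 0)]
          simp only [hC₂def]; ring
  -- A = o(s - s₀)
  have hxo : (fun s => x s - x₀) =o[nhds s₀] (fun s => s - s₀) := by
    have := hasDerivAt_iff_isLittleO.mp hx0'
    simpa using this
  have hAO : (fun s => A s) =O[nhds s₀] (fun s => x s - x₀) := by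
    apply Asymptotics.IsBigO.of_bound C₂
    filter_upwards [Metric.ball_mem_nhds s₀ hε'] with s hs
    simpa [Real.norm_eq_abs] using hAbound s hs
  have hAo := hAO.trans_isLittleO hxo
  have hAd : HasDerivAt A 0 s₀ := by
    rw [hasDerivAt_iff_isLittleO]
    simpa [hAs₀] using hAo
  -- conclude
  have hKd2 : HasDerivAt (fun s => ∫ t in (0:ℝ)..(2*π), F s t) (0 + 0) s₀ := by
    have : (fun s => ∫ t in (0:ℝ)..(2*π), F s t)
        = fun s => A s + (a * x s + b)⁻¹ := by
      funext s; simp only [hAdef]; ring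
    rw [this]
    exact hAd.add hgd
  have := hKderiv.unique hKd2
  simp only [add_zero] at this
  linarith
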